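/- arXiv:math/0202225 — 7 statements merged into one kernel-verified Lean document; each statement's English description precedes it below -/
import Mathlib

section
/- Let X be a type, n a natural number, and let f, g : Fin n → (X → ℝ) be two families of real-valued functions on X such that the family (f₁, …, fₙ) is linearly independent in the real vector space of functions X → ℝ, and such that for all x, y ∈ X one has ∑_{k=1}^{n} f_k(x) · f_k(y) = ∑_{k=1}^{n} g_k(x) · g_k(y). Then there exists a real n × n orthogonal matrix A (i.e. Aᵀ A = I) such that for all j and all x ∈ X, g_j(x) = ∑_{k=1}^{n} A_{jk} f_k(x). -/
open Finset

set_option maxHeartbeats 1000000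

/-- If two finite families of real-valued functions generate the same symmetric
kernel `∑ₖ fₖ(x) fₖ(y)` and the first family is linearly independent, then the
second family is obtained from the first by an orthogonal matrix. -/
theorem kernel_determines_family_up_to_orthogonal
    {X : Type*} (n : ℕ) (f g : Fin n → (X → ℝ))
    (hf : LinearIndependent ℝ f)
    (h : ∀ x y : X, ∑ k, f k x * f k y = ∑ k, g k x * g k y) :
    ∃ A : Matrix (Fin n) (Fin n) ℝ, A.transpose * A = 1 ∧
      ∀ (j : Fin n) (x : X), g j x = ∑ k, A j k * f k x := by
  classical
  let E := EuclideanSpace ℝ (Fin n)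
  let F : X → E := fun x => WithLp.toLp 2 (fun k => f k x)
  let G : X → E := fun x => WithLp.toLp 2 (fun k => g k x)
  have hinner : ∀ x y, (inner ℝ (F x) (F y) : ℝ) = inner ℝ (G x) (G y) := by
    intro x y
    change (fun k => f k y) ⬝ᵥ star (fun k => f k x) = (fun k => g k y) ⬝ᵥ star (fun k => g k x)
    simpa [PiLp.inner_apply, RCLike.inner_apply, F, G, dotProduct, mul_comm] using h x y
  have hspan : Submodule.span ℝ (Set.range F) = ⊤ := by
    rw [← Submodule.orthogonal_eq_bot_iff]
    rw [Submodule.eq_bot_iff]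
    intro c hc
    have hc' : ∀ x : X, (inner ℝ (F x) c : ℝ) = 0 := by
      intro x
      exact hc (F x) (Submodule.subset_span ⟨x, rfl⟩)
    have hzero : ∀ k, c k = 0 := by
      have : (∑ k, c k • f k) = 0 := by
        funext x
        have := hc' x
        rw [EuclideanSpace.inner_eq_star_dotProduct] at this
        simp [PiLp.inner_apply, RCLike.inner_apply, F] at this
        simpa [Finset.sum_apply, mul_comm, dotProduct] using this
      exact Fintype.linearIndependent_iff.mp hf _ this
    exact PiLp.ext hzero
  obtain ⟨b, hbsub, hbspan, hbli⟩ := exists_linearIndependent ℝ (Set.range F)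
  have hbtop : Submodule.span ℝ b = ⊤ := hbspan.trans hspan
  let B : Module.Basis b ℝ E := Module.Basis.mk hbli (by rw [Subtype.range_coe]; rw [hbtop])
  have hxs : ∀ i : b, ∃ x : X, F x = (i : E) := fun i => hbsub i.2
  let xs : b → X := fun i => (hxs i).choose
  have hxs' : ∀ i : b, F (xs i) = (i : E) := fun i => (hxs i).choose_spec
  let T : E →ₗ[ℝ] E := B.constr ℝ (fun i => G (xs i))
  have hTB : ∀ i : b, T (i : E) = G (xs i) := by
    intro i
    have := B.constr_basis ℝ (fun i => G (xs i)) i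
    rwa [Module.Basis.mk_apply] at this
  have hQ : ∀ (y : X) (u : E), (inner ℝ (T u) (G y) : ℝ) = inner ℝ u (F y) := by
    intro y
    have : ((innerSL ℝ (G y)).toLinearMap).comp T = (innerSL ℝ (F y)).toLinearMap := by
      apply Module.Basis.ext B
      intro i
      simp only [LinearMap.comp_apply, ContinuousLinearMap.coe_coe, innerSL_apply_apply,
        Module.Basis.mk_apply, B]
      rw [hTB i]
      exact (real_inner_comm _ _).trans ((hinner (xs i) y).symm.trans
        (by rw [hxs' i]; exact real_inner_comm _ _))
    intro u
    have h2 := LinearMap.congr_fun this u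
    simp only [LinearMap.comp_apply, ContinuousLinearMap.coe_coe, innerSL_apply_apply] at h2
    exact (real_inner_comm _ _).trans (h2.trans (real_inner_comm _ _))
  have hR : ∀ u v : E, (inner ℝ (T u) (T v) : ℝ) = inner ℝ u v := by
    intro u v
    have : ((innerSL ℝ (T v)).toLinearMap).comp T = (innerSL ℝ v).toLinearMap := by
      apply Module.Basis.ext B
      intro i
      simp only [LinearMap.comp_apply, ContinuousLinearMap.coe_coe, innerSL_apply_apply,
        Module.Basis.mk_apply, B]
      rw [hTB i]
      calc (inner ℝ (T v) (G (xs i)) : ℝ)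
          = inner ℝ v (F (xs i)) := hQ (xs i) v
        _ = inner ℝ v ↑i := by rw [hxs' i]
    have h2 := LinearMap.congr_fun this u
    simp only [LinearMap.comp_apply, ContinuousLinearMap.coe_coe, innerSL_apply_apply] at h2
    exact (real_inner_comm _ _).trans (h2.trans (real_inner_comm _ _))
  have hTF : ∀ x : X, T (F x) = G x := by
    intro x
    have hz : (inner ℝ (T (F x) - G x) (T (F x) - G x) : ℝ) = 0 := by
      have e1 : (inner ℝ (T (F x)) (T (F x)) : ℝ) = inner ℝ (F x) (F x) := hR _ _
      have e2 : (inner ℝ (T (F x)) (G x) : ℝ) = inner ℝ (F x) (F x) := hQ x (F x)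
      have e3 : (inner ℝ (G x) (T (F x)) : ℝ) = inner ℝ (F x) (F x) :=
        (real_inner_comm _ _).trans e2
      have e4 : (inner ℝ (G x) (G x) : ℝ) = inner ℝ (F x) (F x) := (hinner x x).symm
      rw [inner_sub_left, inner_sub_right, inner_sub_right]
      linarith [e1, e2, e3, e4]
    exact sub_eq_zero.mp (inner_self_eq_zero.mp hz)
  let A : Matrix (Fin n) (Fin n) ℝ := Matrix.of fun j k => T (EuclideanSpace.single k 1) j
  have hTv : ∀ (v : E) (j : Fin n), T v j = ∑ k, A j k * v k := by
    intro v j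
    have hsum : ∀ (w : Fin n → E) (i : Fin n), (∑ x, w x) i = ∑ x, w x i :=
      fun w i => by rw [WithLp.ofLp_sum, Finset.sum_apply]
    have hv : v = ∑ k, v k • EuclideanSpace.single k (1 : ℝ) := by
      ext i
      rw [hsum]
      simp [EuclideanSpace.single_apply]
    conv_lhs => rw [hv]
    rw [map_sum, hsum]
    refine Finset.sum_congr rfl fun x _ => ?_
    rw [map_smul]
    show v x * T (EuclideanSpace.single x 1) j = T (EuclideanSpace.single x 1) j * v x
    exact mul_comm _ _
  refine ⟨A, ?_, ?_⟩
  · ext k l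
    have h1 := hR (EuclideanSpace.single k (1 : ℝ)) (EuclideanSpace.single l (1 : ℝ))
    rw [Matrix.mul_apply, Matrix.one_apply]
    simp only [Matrix.transpose_apply, A, Matrix.of_apply]
    calc ∑ x, T (EuclideanSpace.single k 1) x * T (EuclideanSpace.single l 1) x
        = (inner ℝ (T (EuclideanSpace.single k (1:ℝ))) (T (EuclideanSpace.single l (1:ℝ))) : ℝ) := by
          rw [EuclideanSpace.inner_eq_star_dotProduct]; simp [dotProduct, mul_comm]
      _ = inner ℝ (EuclideanSpace.single k (1:ℝ)) (EuclideanSpace.single l (1:ℝ)) := h1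
      _ = if k = l then 1 else 0 := by
          simp [EuclideanSpace.inner_single_left, EuclideanSpace.single_apply, eq_comm]
  · intro j x
    have := congrArg (fun v => v j) (hTF x)
    rw [hTv (F x) j] at this
    exact this.symm
end

section
/- Let μ : ℕ → ℝ be an injective function with μ_l ≥ 0 for all l, and let c : ℕ → ℝ satisfy ∑_l |c_l| < ∞. If for every τ ∈ ℝ one has ∑_{l=0}^{∞} c_l · cos(μ_l τ) = 0, then c_l = 0 for every l. In other words, an absolutely convergent cosine series with distinct nonnegative frequencies is uniquely determined by its sum. -/
open Real MeasureTheory Filter intervalIntegral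

private lemma J_eq (c T : ℝ) :
    ∫ x in (0:ℝ)..T, Real.cos (c * x) = if c = 0 then T else Real.sin (c * T) / c := by
  by_cases hc : c = 0
  · simp [hc]
  · rw [if_neg hc, intervalIntegral.integral_comp_mul_left (fun x => Real.cos x) hc]
    simp [integral_cos, div_eq_inv_mul]

private lemma jlim (c : ℝ) :
    Tendsto (fun T => (if c = 0 then T else Real.sin (c * T) / c) / T) atTop
      (nhds (if c = 0 then 1 else 0)) := by
  by_cases hc : c = 0
  · simp only [hc, if_true]
    refine Tendsto.congr' ?_ tendsto_const_nhds
    filter_upwards [eventually_gt_atTop 0] with T hT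
    exact (div_self hT.ne').symm
  · simp only [hc, if_false]
    apply squeeze_zero_norm' (a := fun T : ℝ => |c|⁻¹ * T⁻¹)
    · filter_upwards [eventually_gt_atTop 0] with T hT
      rw [Real.norm_eq_abs, abs_div, abs_div, abs_of_pos hT, div_div]
      rw [div_le_iff₀ (by positivity)]
      have h1 := abs_sin_le_one (c * T)
      have h2 : 0 < |c| := abs_pos.mpr hc
      have h3 : |c|⁻¹ * T⁻¹ * (|c| * T) = 1 := by field_simp
      linarith
    · simpa using tendsto_inv_atTop_zero.const_mul |c|⁻¹

/-- An absolutely convergent cosine series with pairwise distinct nonnegative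
frequencies which vanishes identically has all coefficients zero. -/
theorem cosine_series_coeffs_unique (μ : ℕ → ℝ) (hμ : Function.Injective μ)
    (hμ0 : ∀ l, 0 ≤ μ l) (c : ℕ → ℝ) (hc : Summable fun l => |c l|)
    (h : ∀ τ : ℝ, ∑' l, c l * Real.cos (μ l * τ) = 0) :
    ∀ l, c l = 0 := by
  intro k
  set I : ℕ → ℝ → ℝ :=
    fun l T => ∫ x in (0:ℝ)..T, Real.cos (μ l * x) * Real.cos (μ k * x) with hIdef
  -- Step 1: for T > 0, the integrated series vanishes
  have key : ∀ T : ℝ, 0 < T → ∑' l, c l * I l T = 0 := by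
    intro T hT
    set F : ℕ → ℝ → ℝ :=
      fun l τ => c l * Real.cos (μ l * τ) * Real.cos (μ k * τ) with hFdef
    have hcont : ∀ l, Continuous (F l) := by
      intro l; fun_prop
    have hFint : ∀ l, Integrable (F l) (volume.restrict (Set.Ioc 0 T)) :=
      fun l => ((hcont l).integrableOn_Ioc (a := 0) (b := T))
    have hFle : ∀ l x, ‖F l x‖ ≤ |c l| := by
      intro l x
      have h1 := abs_cos_le_one (μ l * x)
      have h2 := abs_cos_le_one (μ k * x)
      have h3 := abs_nonneg (Real.cos (μ l * x))
      have h4 := abs_nonneg (Real.cos (μ k * x))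
      have h5 := abs_nonneg (c l)
      rw [Real.norm_eq_abs, hFdef, abs_mul, abs_mul]
      nlinarith [mul_nonneg h5 h3, mul_nonneg h5 h4, mul_nonneg h3 h4,
        mul_nonneg (mul_nonneg h5 h3) h4]
    have hFsum : Summable fun l => ∫ x in Set.Ioc (0:ℝ) T, ‖F l x‖ := by
      apply Summable.of_nonneg_of_le
        (fun l => integral_nonneg fun x => norm_nonneg _)
        (fun l => ?_) (hc.mul_right T)
      calc ∫ x in Set.Ioc (0:ℝ) T, ‖F l x‖
          ≤ ∫ _x in Set.Ioc (0:ℝ) T, |c l| := by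
            apply integral_mono ((hFint l).norm) (Iff.mpr integrableOn_const_iff (Or.inr ?_))
              (fun x => hFle l x)
            simpa using hT
        _ = |c l| * T := by
            rw [setIntegral_const]
            simp [Real.volume_Ioc, hT.le, mul_comm]
    have swap := integral_tsum_of_summable_integral_norm hFint hFsum
    have hzero : ∀ x : ℝ, ∑' l, F l x = 0 := by
      intro x
      have := h x
      calc ∑' l, F l x = (∑' l, c l * Real.cos (μ l * x)) * Real.cos (μ k * x) := by
            rw [← tsum_mul_right]
        _ = 0 := by rw [this, zero_mul]
    have hIF : ∀ l, ∫ x in Set.Ioc (0:ℝ) T, F l x = c l * I l T := by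
      intro l
      rw [← intervalIntegral.integral_of_le hT.le, hIdef, hFdef]
      simp only
      rw [← intervalIntegral.integral_const_mul]
      congr 1; ext x; ring
    calc ∑' l, c l * I l T = ∑' l, ∫ x in Set.Ioc (0:ℝ) T, F l x := by
          simp_rw [hIF]
      _ = ∫ x in Set.Ioc (0:ℝ) T, (∑' l, F l x) := swap
      _ = 0 := by simp_rw [hzero]; simp
  -- Step 2: explicit formula for I
  have Iform : ∀ l T, I l T =
      ((if μ l - μ k = 0 then T else Real.sin ((μ l - μ k) * T) / (μ l - μ k)) +
       (if μ l + μ k = 0 then T else Real.sin ((μ l + μ k) * T) / (μ l + μ k))) / 2 := by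
    intro l T
    have hprod : ∀ x : ℝ, Real.cos (μ l * x) * Real.cos (μ k * x) =
        (Real.cos ((μ l - μ k) * x) + Real.cos ((μ l + μ k) * x)) / 2 := by
      intro x
      rw [sub_mul, add_mul, Real.cos_sub, Real.cos_add]
      ring
    have hint1 : IntervalIntegrable (fun x => Real.cos ((μ l - μ k) * x)) volume 0 T := by
      apply Continuous.intervalIntegrable; fun_prop
    have hint2 : IntervalIntegrable (fun x => Real.cos ((μ l + μ k) * x)) volume 0 T := by
      apply Continuous.intervalIntegrable; fun_prop
    rw [hIdef]
    simp only
    rw [intervalIntegral.integral_congr (g := fun x =>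
        (Real.cos ((μ l - μ k) * x) + Real.cos ((μ l + μ k) * x)) / 2)
        (fun x _ => hprod x)]
    rw [intervalIntegral.integral_div, intervalIntegral.integral_add hint1 hint2,
      J_eq, J_eq]
  -- the limiting value
  set d : ℝ := if μ k = 0 then 1 else 1/2 with hd
  have hd0 : d ≠ 0 := by
    rw [hd]; split <;> norm_num
  -- Step 3: limits of I l T / T
  have hlim0 : ∀ l, Tendsto (fun T => I l T / T) atTop
      (nhds (if l = k then d else 0)) := by
    intro l
    have := ((jlim (μ l - μ k)).add (jlim (μ l + μ k))).div_const 2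
    have heq : (fun T => ((if μ l - μ k = 0 then T else
          Real.sin ((μ l - μ k) * T) / (μ l - μ k)) / T +
        (if μ l + μ k = 0 then T else Real.sin ((μ l + μ k) * T) / (μ l + μ k)) / T) / 2)
        = fun T => I l T / T := by
      ext T
      rw [Iform l T]
      ring
    rw [heq] at this
    convert this using 2
    by_cases hl : l = k
    · subst hl
      rw [if_pos rfl, hd]
      by_cases h0 : μ l = 0
      · rw [if_pos h0, if_pos (by rw [h0]; ring), if_pos (by rw [h0]; ring)]
        norm_num
      · rw [if_neg h0, if_pos (by ring), if_neg (by
          intro hcon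
          exact h0 (by linarith [hμ0 l]))]
        norm_num
    · rw [if_neg hl, if_neg (sub_ne_zero.mpr (fun hco => hl (hμ hco))),
        if_neg (fun hcon => ?_)]
      · norm_num
      · have h1 := hμ0 l
        have h2 := hμ0 k
        have hl0 : μ l = 0 := by linarith
        have hk0 : μ k = 0 := by linarith
        exact hl (hμ (hl0.trans hk0.symm))
  have hlim : ∀ l, Tendsto (fun T => c l * I l T / T) atTop
      (nhds (if l = k then c k * d else 0)) := by
    intro l
    have := (hlim0 l).const_mul (c l)
    have heq : (fun T => c l * (I l T / T)) = fun T => c l * I l T / T := by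
      ext T; ring
    rw [heq] at this
    convert this using 2
    by_cases hl : l = k
    · subst hl; simp
    · simp [hl]
  -- Step 4: uniform bound
  have hbound : ∀ᶠ T in atTop, ∀ l, ‖c l * I l T / T‖ ≤ |c l| := by
    filter_upwards [eventually_gt_atTop 0] with T hT l
    have hIle : |I l T| ≤ T := by
      have := intervalIntegral.norm_integral_le_of_norm_le_const
        (C := 1) (f := fun x => Real.cos (μ l * x) * Real.cos (μ k * x))
        (a := 0) (b := T) (fun x _ => by
          rw [Real.norm_eq_abs, abs_mul]
          exact mul_le_one₀ (abs_cos_le_one _) (abs_nonneg _) (abs_cos_le_one _))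
      simpa [Real.norm_eq_abs, abs_of_pos hT] using this
    calc ‖c l * I l T / T‖ = |c l| * |I l T| / T := by
          rw [Real.norm_eq_abs, abs_div, abs_mul, abs_of_pos hT]
      _ ≤ |c l| * T / T := by gcongr
      _ = |c l| := by field_simp
  -- conclude
  have main := tendsto_tsum_of_dominated_convergence hc hlim hbound
  have hsum_g : ∑' l, (if l = k then c k * d else 0) = c k * d := by
    rw [tsum_eq_single k (fun b hb => if_neg hb)]
    simp
  rw [hsum_g] at main
  have main2 : Tendsto (fun T => ∑' l, c l * I l T / T) atTop (nhds 0) := by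
    refine Tendsto.congr' ?_ tendsto_const_nhds
    filter_upwards [eventually_gt_atTop 0] with T hT
    rw [tsum_div_const, key T hT, zero_div]
  have : c k * d = 0 := tendsto_nhds_unique main main2
  exact (mul_eq_zero.mp this).resolve_right hd0
end

section
/- Let μ : ℕ → ℝ be an injective function with μ_l ≥ 0 for all l, let c : ℕ → ℝ satisfy ∑_l |c_l| < ∞, and set F(τ) = ∑_{l=0}^{∞} c_l · cos(μ_l τ). Then for every ν > 0, the Cesàro averages recover the coefficient of frequency ν: lim_{T → ∞} (1/T) ∫₀^T F(τ) cos(ντ) dτ = (1/2) · ∑_{l : μ_l = ν} c_l. In particular the limit equals c_{l₀}/2 if ν = μ_{l₀} for some l₀, and equals 0 if ν is not in the range of μ. -/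
open MeasureTheory Filter

lemma integral_cos_mul_aux (k T : ℝ) (hk : k ≠ 0) :
    ∫ τ in (0:ℝ)..T, Real.cos (k * τ) = Real.sin (k * T) / k := by
  have := intervalIntegral.integral_comp_mul_left (a := (0:ℝ)) (b := T)
    (fun x => Real.cos x) hk
  rw [this]
  simp [integral_cos, div_eq_inv_mul]

lemma avg_cos_tendsto (k : ℝ) :
    Tendsto (fun T : ℝ => (1 / T) * ∫ τ in (0:ℝ)..T, Real.cos (k * τ)) atTop
      (nhds (if k = 0 then 1 else 0)) := by
  by_cases hk : k = 0
  · simp only [hk, if_true]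
    have : ∀ᶠ T : ℝ in atTop,
        (1 / T) * (∫ τ in (0:ℝ)..T, Real.cos (0 * τ)) = 1 := by
      filter_upwards [eventually_gt_atTop (0:ℝ)] with T hT
      simp only [zero_mul, Real.cos_zero, intervalIntegral.integral_const, smul_eq_mul,
        mul_one, sub_zero]
      field_simp
    exact Tendsto.congr' (this.mono fun T h => h.symm) tendsto_const_nhds
  · simp only [hk, if_false]
    apply squeeze_zero_norm' (a := fun T : ℝ => |k|⁻¹ * T⁻¹)
    · filter_upwards [eventually_gt_atTop (0:ℝ)] with T hT
      rw [integral_cos_mul_aux k T hk]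
      rw [Real.norm_eq_abs, abs_mul, abs_div, abs_div]
      calc |1| / |T| * (|Real.sin (k * T)| / |k|)
          ≤ |1| / |T| * (1 / |k|) := by
            gcongr
            exact Real.abs_sin_le_one _
        _ = |k|⁻¹ * T⁻¹ := by
            rw [abs_one, abs_of_pos hT]
            ring
    · simpa using (tendsto_inv_atTop_zero.const_mul (|k|⁻¹))

lemma avg_coscos_tendsto (a b : ℝ) (ha : 0 ≤ a) (hb : 0 < b) :
    Tendsto (fun T : ℝ => (1 / T) * ∫ τ in (0:ℝ)..T, Real.cos (a * τ) * Real.cos (b * τ))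
      atTop (nhds (if a = b then 1/2 else 0)) := by
  have hint : ∀ (k : ℝ) (T : ℝ),
      IntervalIntegrable (fun τ => Real.cos (k * τ)) volume 0 T := fun k T =>
    (Real.continuous_cos.comp (continuous_const.mul continuous_id)).intervalIntegrable 0 T
  have key : ∀ T : ℝ, (1 / T) * ∫ τ in (0:ℝ)..T, Real.cos (a * τ) * Real.cos (b * τ)
      = (1/2) * ((1 / T) * ∫ τ in (0:ℝ)..T, Real.cos ((a - b) * τ))
        + (1/2) * ((1 / T) * ∫ τ in (0:ℝ)..T, Real.cos ((a + b) * τ)) := by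
    intro T
    have hptw : ∀ τ : ℝ, Real.cos (a * τ) * Real.cos (b * τ)
        = (1/2) * (Real.cos ((a - b) * τ) + Real.cos ((a + b) * τ)) := by
      intro τ
      have h1 : (a - b) * τ = a * τ - b * τ := by ring
      have h2 : (a + b) * τ = a * τ + b * τ := by ring
      rw [h1, h2, Real.cos_sub, Real.cos_add]
      ring
    have : (∫ τ in (0:ℝ)..T, Real.cos (a * τ) * Real.cos (b * τ))
        = (1/2) * ((∫ τ in (0:ℝ)..T, Real.cos ((a - b) * τ))
            + (∫ τ in (0:ℝ)..T, Real.cos ((a + b) * τ))) := by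
      rw [← intervalIntegral.integral_add (hint _ _) (hint _ _),
        ← intervalIntegral.integral_const_mul]
      exact intervalIntegral.integral_congr (fun τ _ => hptw τ)
    rw [this]; ring
  rw [funext key]
  have h1 := (avg_cos_tendsto (a - b)).const_mul (1/2 : ℝ)
  have h2 := (avg_cos_tendsto (a + b)).const_mul (1/2 : ℝ)
  have := h1.add h2
  convert this using 2
  have hab : a + b ≠ 0 := by positivity
  by_cases h : a = b
  · have hbb : b + b ≠ 0 := by positivity
    simp [h, hbb]
  · have : a - b ≠ 0 := sub_ne_zero.mpr h
    simp [h, this, hab]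

lemma mySwapIntegral (μ : ℕ → ℝ) (c : ℕ → ℝ) (hc : Summable fun l => |c l|)
    (ν T : ℝ) (hT : 0 ≤ T) :
    ∫ τ in (0:ℝ)..T, (∑' l, c l * Real.cos (μ l * τ)) * Real.cos (ν * τ)
      = ∑' l, c l * ∫ τ in (0:ℝ)..T, Real.cos (μ l * τ) * Real.cos (ν * τ) := by
  have hcont : ∀ l : ℕ, Continuous (fun τ : ℝ => c l * Real.cos (μ l * τ) * Real.cos (ν * τ)) := by
    intro l
    fun_prop
  have hIoc : MeasurableSet (Set.Ioc (0:ℝ) T) := measurableSet_Ioc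
  have hmeas : (volume (Set.Ioc (0:ℝ) T)) < ⊤ := by
    simp [Real.volume_Ioc]
  have hint : ∀ l : ℕ, Integrable (fun τ : ℝ => c l * Real.cos (μ l * τ) * Real.cos (ν * τ))
      (volume.restrict (Set.Ioc (0:ℝ) T)) := by
    intro l
    exact ((hcont l).integrableOn_Ioc).integrable
  have hbnd : ∀ l : ℕ, ∀ τ ∈ Set.Ioc (0:ℝ) T,
      ‖‖c l * Real.cos (μ l * τ) * Real.cos (ν * τ)‖‖ ≤ |c l| := by
    intro l τ _
    rw [norm_norm]
    calc ‖c l * Real.cos (μ l * τ) * Real.cos (ν * τ)‖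
        = |c l| * (|Real.cos (μ l * τ)| * |Real.cos (ν * τ)|) := by
          simp [abs_mul, mul_assoc]
      _ ≤ |c l| * (1 * 1) := by
          gcongr
          · exact Real.abs_cos_le_one _
          · exact Real.abs_cos_le_one _
      _ = |c l| := by ring
  have hsum : Summable fun l =>
      ∫ τ in Set.Ioc (0:ℝ) T, ‖c l * Real.cos (μ l * τ) * Real.cos (ν * τ)‖ := by
    apply Summable.of_nonneg_of_le
      (fun l => integral_nonneg (fun τ => norm_nonneg _))
      (fun l => ?_) (hc.mul_right T)
    calc (∫ τ in Set.Ioc (0:ℝ) T, ‖c l * Real.cos (μ l * τ) * Real.cos (ν * τ)‖)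
        ≤ ‖∫ τ in Set.Ioc (0:ℝ) T, ‖c l * Real.cos (μ l * τ) * Real.cos (ν * τ)‖‖ :=
          le_abs_self _
      _ ≤ |c l| * (volume (Set.Ioc (0:ℝ) T)).toReal :=
          norm_setIntegral_le_of_norm_le_const hmeas (hbnd l)
      _ = |c l| * T := by simp [Real.volume_Ioc, hT]
  have hswap := integral_tsum_of_summable_integral_norm hint hsum
  rw [intervalIntegral.integral_of_le hT]
  have heq : ∀ τ : ℝ, (∑' l, c l * Real.cos (μ l * τ)) * Real.cos (ν * τ)
      = ∑' l, c l * Real.cos (μ l * τ) * Real.cos (ν * τ) := by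
    intro τ
    exact (tsum_mul_right).symm
  rw [MeasureTheory.integral_congr_ae (Filter.Eventually.of_forall heq), ← hswap]
  apply tsum_congr
  intro l
  rw [intervalIntegral.integral_of_le hT, ← MeasureTheory.integral_const_mul]
  apply MeasureTheory.integral_congr_ae (Filter.Eventually.of_forall ?_)
  intro τ
  ring

/-- Cesàro averages against `cos (ν τ)` recover the coefficient of frequency `ν`
in an absolutely convergent cosine series with pairwise distinct nonnegative
frequencies. -/
theorem cosine_series_cesaro_recovers_coeff (μ : ℕ → ℝ) (hμ : Function.Injective μ)
    (hμ0 : ∀ l, 0 ≤ μ l) (c : ℕ → ℝ) (hc : Summable fun l => |c l|)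
    (F : ℝ → ℝ) (hF : ∀ τ, F τ = ∑' l, c l * Real.cos (μ l * τ)) :
    ∀ ν : ℝ, 0 < ν →
      Tendsto (fun T : ℝ => (1 / T) * ∫ τ in (0 : ℝ)..T, F τ * Real.cos (ν * τ))
        atTop (nhds ((1 / 2) * ∑' l : {l : ℕ // μ l = ν}, c l)) := by
  intro ν hν
  set h : ℝ → ℕ → ℝ := fun T l =>
    c l * ((1 / T) * ∫ τ in (0:ℝ)..T, Real.cos (μ l * τ) * Real.cos (ν * τ)) with hh
  set g : ℕ → ℝ := fun l => c l * (if μ l = ν then 1/2 else 0) with hg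
  have hmain : Tendsto (fun T => ∑' l, h T l) atTop (nhds (∑' l, g l)) := by
    apply tendsto_tsum_of_dominated_convergence (bound := fun l => |c l|) hc
    · intro l
      exact ((avg_coscos_tendsto (μ l) ν (hμ0 l) hν).const_mul (c l))
    · filter_upwards [eventually_gt_atTop (0:ℝ)] with T hT
      intro l
      have hb : ‖∫ τ in (0:ℝ)..T, Real.cos (μ l * τ) * Real.cos (ν * τ)‖ ≤ 1 * |T - 0| := by
        apply intervalIntegral.norm_integral_le_of_norm_le_const
        intro x _
        calc ‖Real.cos (μ l * x) * Real.cos (ν * x)‖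
            = |Real.cos (μ l * x)| * |Real.cos (ν * x)| := abs_mul _ _
          _ ≤ 1 * 1 := by
              gcongr
              · exact Real.abs_cos_le_one _
              · exact Real.abs_cos_le_one _
          _ = 1 := one_mul 1
      show ‖c l * ((1 / T) * ∫ τ in (0:ℝ)..T, Real.cos (μ l * τ) * Real.cos (ν * τ))‖ ≤ |c l|
      rw [norm_mul, norm_mul]
      calc |c l| * (|1 / T| * ‖∫ τ in (0:ℝ)..T, Real.cos (μ l * τ) * Real.cos (ν * τ)‖)
          ≤ |c l| * (|1 / T| * (1 * |T - 0|)) := by gcongr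
        _ = |c l| := by
            rw [abs_of_pos (by positivity : (0:ℝ) < 1 / T), sub_zero,
              abs_of_pos hT]
            field_simp
  have heq : ∀ᶠ T : ℝ in atTop,
      (1 / T) * (∫ τ in (0:ℝ)..T, F τ * Real.cos (ν * τ)) = ∑' l, h T l := by
    filter_upwards [eventually_ge_atTop (0:ℝ)] with T hT
    have h1 : (∫ τ in (0:ℝ)..T, F τ * Real.cos (ν * τ))
        = ∑' l, c l * ∫ τ in (0:ℝ)..T, Real.cos (μ l * τ) * Real.cos (ν * τ) := by
      rw [show (fun τ => F τ * Real.cos (ν * τ))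
          = fun τ => (∑' l, c l * Real.cos (μ l * τ)) * Real.cos (ν * τ) from
        funext fun τ => by rw [hF τ]]
      exact mySwapIntegral μ c hc ν T hT
    rw [h1, ← tsum_mul_left]
    apply tsum_congr
    intro l
    simp [hh]; ring
  have hval : (∑' l, g l) = (1 / 2) * ∑' l : {l : ℕ // μ l = ν}, c l := by
    have : (∑' l : {l : ℕ // μ l = ν}, c l)
        = ∑' l : ℕ, Set.indicator {l : ℕ | μ l = ν} c l :=
      tsum_subtype {l : ℕ | μ l = ν} c
    rw [this, ← tsum_mul_left]
    apply tsum_congr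
    intro l
    by_cases hlv : μ l = ν
    · simp [hg, hlv, Set.indicator_of_mem (show l ∈ {l : ℕ | μ l = ν} from hlv)]
      ring
    · simp [hg, hlv, Set.indicator_of_notMem (show l ∉ {l : ℕ | μ l = ν} from hlv)]
  rw [← hval]
  exact Tendsto.congr' (heq.mono fun T hT => hT.symm) hmain
end

section
/- Let λ : ℕ → ℝ be an injective function and let c : ℕ → ℂ satisfy ∑_l |c_l| < ∞, and set F(τ) = ∑_{l=0}^{∞} c_l · e^{−iλ_l τ} for τ ∈ ℝ. Then for every ν ∈ ℝ, lim_{T → ∞} (1/T) ∫₀^T e^{iντ} F(τ) dτ = ∑_{l : λ_l = ν} c_l. In particular the limit equals c_{l₀} if ν = λ_{l₀} for some l₀, and equals 0 if ν is not in the range of λ; hence F determines all the frequencies λ_l with c_l ≠ 0 and the corresponding coefficients. -/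
open MeasureTheory Filter Complex

/-- Cesàro averages against `e^{iντ}` recover the coefficient of frequency `ν`
in an absolutely convergent series `∑ c_l e^{-iλ_l τ}` with pairwise distinct
real frequencies. -/
theorem exponential_series_cesaro_recovers_coeff (lam : ℕ → ℝ)
    (hlam : Function.Injective lam) (c : ℕ → ℂ) (hc : Summable fun l => ‖c l‖)
    (F : ℝ → ℂ) (hF : ∀ τ : ℝ, F τ = ∑' l, c l * Complex.exp (-I * lam l * τ)) :
    ∀ ν : ℝ,
      Tendsto (fun T : ℝ => (T : ℂ)⁻¹ * ∫ τ in (0 : ℝ)..T,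
          Complex.exp (I * ν * τ) * F τ)
        atTop (nhds (∑' l : {l : ℕ // lam l = ν}, c l)) := by
  intro ν
  set e : ℕ → C(ℝ, ℂ) := fun l =>
    ⟨fun τ => c l * Complex.exp (I * (ν - lam l) * τ), by continuity⟩ with he
  have hnorm : ∀ l (τ : ℝ), ‖c l * Complex.exp (I * (ν - lam l) * τ)‖ = ‖c l‖ := by
    intro l τ
    rw [norm_mul, Complex.norm_exp]
    simp
  have hintegrand : ∀ τ : ℝ, Complex.exp (I * ν * τ) * F τ = ∑' l, e l τ := by
    intro τ
    rw [hF τ, ← tsum_mul_left]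
    congr 1; funext l
    simp only [he, ContinuousMap.coe_mk]
    rw [← mul_assoc, mul_comm (Complex.exp _) (c l), mul_assoc, ← Complex.exp_add]
    congr 2
    push_cast; ring
  have hsum_norm : ∀ T : ℝ, Summable fun l : ℕ =>
      ‖(e l).restrict (⟨Set.uIcc 0 T, isCompact_uIcc⟩ : TopologicalSpace.Compacts ℝ)‖ := by
    intro T
    apply hc.of_norm_bounded
    intro l
    rw [Real.norm_eq_abs, _root_.abs_of_nonneg (norm_nonneg _)]
    apply ContinuousMap.norm_le _ (norm_nonneg _) |>.2
    intro x
    simp only [ContinuousMap.restrict_apply, he, ContinuousMap.coe_mk]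
    exact (hnorm l x).le
  have hswap : ∀ T : ℝ, (∫ τ in (0:ℝ)..T, Complex.exp (I * ν * τ) * F τ)
      = ∑' l, ∫ τ in (0:ℝ)..T, e l τ := by
    intro T
    rw [show (fun τ : ℝ => Complex.exp (I * ν * τ) * F τ) = fun τ : ℝ => ∑' l, e l τ from
      funext hintegrand]
    exact (intervalIntegral.tsum_intervalIntegral_eq_of_summable_norm (hsum_norm T)).symm
  have hfun : (fun T : ℝ => (T : ℂ)⁻¹ * ∫ τ in (0 : ℝ)..T, Complex.exp (I * ν * τ) * F τ)
      = fun T : ℝ => ∑' l, (T : ℂ)⁻¹ * ∫ τ in (0:ℝ)..T, e l τ := by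
    funext T
    rw [hswap T, ← tsum_mul_left]
  rw [hfun]
  have hrhs : (∑' l : {l : ℕ // lam l = ν}, c l)
      = ∑' l : ℕ, if lam l = ν then c l else 0 := by
    have h0 : (∑' l : {l : ℕ // lam l = ν}, c l)
        = ∑' l : ℕ, Set.indicator {l : ℕ | lam l = ν} c l := tsum_subtype _ c
    rw [h0]
    congr 1
  rw [hrhs]
  apply tendsto_tsum_of_dominated_convergence hc
  · intro l
    by_cases h : lam l = ν
    · simp only [if_pos h]
      have heq : ∀ᶠ T : ℝ in atTop,
          (T : ℂ)⁻¹ * ∫ τ in (0:ℝ)..T, e l τ = c l := by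
        filter_upwards [eventually_ge_atTop (1:ℝ)] with T hT
        have hT0 : (T : ℂ) ≠ 0 := by
          exact_mod_cast ne_of_gt (lt_of_lt_of_le one_pos hT)
        have hcst : ∀ τ : ℝ, e l τ = c l := by
          intro τ; simp [he, h]
        rw [show (fun τ : ℝ => e l τ) = fun _ : ℝ => c l from funext hcst,
          intervalIntegral.integral_const, sub_zero, Complex.real_smul,
          ← mul_assoc, inv_mul_cancel₀ hT0, one_mul]
      exact tendsto_const_nhds.congr' (heq.mono fun T hTe => hTe.symm)
    · simp only [if_neg h]
      rw [tendsto_zero_iff_norm_tendsto_zero]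
      set w : ℂ := I * ((ν : ℂ) - lam l) with hw
      have haw : w ≠ 0 := by
        refine mul_ne_zero I_ne_zero (sub_ne_zero_of_ne ?_)
        exact_mod_cast Ne.symm h
      have hwpos : 0 < ‖w‖ := norm_pos_iff.mpr haw
      apply squeeze_zero' (Eventually.of_forall fun T => norm_nonneg _)
        (g := fun T : ℝ => T⁻¹ * (2 / ‖w‖ * ‖c l‖))
      · filter_upwards [eventually_ge_atTop (1:ℝ)] with T hT
        have hT0 : (0:ℝ) < T := lt_of_lt_of_le one_pos hT
        have hint : (∫ τ in (0:ℝ)..T, e l τ)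
            = c l * ((Complex.exp (w * T) - Complex.exp (w * 0)) / w) := by
          rw [show (fun τ : ℝ => e l τ)
              = fun τ : ℝ => c l * Complex.exp (w * τ) from by funext τ; simp [he, hw],
            intervalIntegral.integral_const_mul, integral_exp_mul_complex haw]
          push_cast; ring
        rw [hint, norm_mul, norm_mul, norm_div, norm_inv, Complex.norm_real,
          Real.norm_eq_abs, _root_.abs_of_pos hT0]
        have h1 : ‖Complex.exp (w * T)‖ = 1 := by
          rw [Complex.norm_exp]; simp [hw]
        have h2 : ‖Complex.exp (w * 0)‖ = 1 := by simp
        have hnum : ‖Complex.exp (w * T) - Complex.exp (w * 0)‖ ≤ 2 := by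
          have := norm_sub_le (Complex.exp (w * T)) (Complex.exp (w * 0))
          rw [h1, h2] at this; linarith
        have : ‖c l‖ * (‖Complex.exp (w * ↑T) - Complex.exp (w * 0)‖ / ‖w‖)
            ≤ 2 / ‖w‖ * ‖c l‖ := by
          rw [mul_comm]
          gcongr
        calc T⁻¹ * (‖c l‖ * (‖Complex.exp (w * ↑T) - Complex.exp (w * 0)‖ / ‖w‖))
            ≤ T⁻¹ * (2 / ‖w‖ * ‖c l‖) :=
              mul_le_mul_of_nonneg_left this (inv_nonneg.2 hT0.le)
          _ = T⁻¹ * (2 / ‖w‖ * ‖c l‖) := rfl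
      · simpa using tendsto_inv_atTop_zero.mul_const (2 / ‖w‖ * ‖c l‖)
  · filter_upwards [eventually_ge_atTop (1:ℝ)] with T hT
    intro l
    have hT0 : (0:ℝ) < T := lt_of_lt_of_le one_pos hT
    rw [norm_mul, norm_inv, Complex.norm_real, Real.norm_eq_abs, _root_.abs_of_pos hT0]
    have hbd : ‖∫ τ in (0:ℝ)..T, e l τ‖ ≤ ‖c l‖ * |T - 0| := by
      apply intervalIntegral.norm_integral_le_of_norm_le_const
      intro x _
      exact (hnorm l x).le
    rw [sub_zero, _root_.abs_of_pos hT0] at hbd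
    calc T⁻¹ * ‖∫ τ in (0:ℝ)..T, e l τ‖ ≤ T⁻¹ * (‖c l‖ * T) :=
          mul_le_mul_of_nonneg_left hbd (inv_nonneg.2 hT0.le)
      _ = ‖c l‖ := by field_simp
end

section
/- Let λ : ℕ → ℝ be strictly increasing and let c : ℕ → ℝ be such that for every τ > 0 the series ∑_l |c_l| e^{−λ_l τ} converges. If ∑_{l=0}^{∞} c_l e^{−λ_l τ} = 0 for all τ > 0, then c_l = 0 for every l. In other words, a generalized Dirichlet series with strictly increasing real exponents, absolutely convergent for every τ > 0, is uniquely determined by its sum on (0, ∞). -/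
/-- A generalized Dirichlet series with strictly increasing real exponents,
absolutely convergent for every `τ > 0`, which vanishes for all `τ > 0`,
has all coefficients zero. -/
theorem dirichlet_series_coeffs_unique (lam : ℕ → ℝ) (hlam : StrictMono lam)
    (c : ℕ → ℝ)
    (hc : ∀ τ : ℝ, 0 < τ → Summable fun l => |c l| * Real.exp (-(lam l) * τ))
    (h : ∀ τ : ℝ, 0 < τ → ∑' l, c l * Real.exp (-(lam l) * τ) = 0) :
    ∀ l, c l = 0 := by
  intro n
  induction n using Nat.strong_induction_on with
  | _ n ih =>
  set δ : ℝ := lam (n+1) - lam n with hδdef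
  have hδ : 0 < δ := sub_pos.2 (hlam (Nat.lt_succ_self n))
  -- tail sum at τ = 1
  have habs1 : Summable fun l => |c l| * Real.exp (-(lam l)) := by
    simpa using hc 1 one_pos
  have habs1' : Summable fun i => |c (i+(n+1))| * Real.exp (-(lam (i+(n+1)))) :=
    (summable_nat_add_iff (f := fun l => |c l| * Real.exp (-(lam l))) (n+1)).mpr habs1
  set T : ℝ := ∑' i, |c (i+(n+1))| * Real.exp (-(lam (i+(n+1)))) with hT
  have hT0 : 0 ≤ T :=
    tsum_nonneg fun i => mul_nonneg (abs_nonneg _) (Real.exp_pos _).le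
  set K : ℝ := Real.exp (lam n) * T with hK
  have key : ∀ τ : ℝ, 1 ≤ τ → |c n| ≤ K * Real.exp (-δ * (τ-1)) := by
    intro τ hτ
    have hτ0 : (0:ℝ) < τ := by linarith
    have habs : Summable fun l => |c l| * Real.exp (-(lam l) * τ) := hc τ hτ0
    have hs : Summable fun l => c l * Real.exp (-(lam l) * τ) := by
      apply Summable.of_abs
      simpa [abs_mul, abs_of_pos (Real.exp_pos _)] using habs
    have hsplit := Summable.sum_add_tsum_nat_add (f := fun l => c l * Real.exp (-(lam l) * τ)) (n+1) hs
    rw [h τ hτ0] at hsplit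
    have hrange : ∑ i ∈ Finset.range (n+1), c i * Real.exp (-(lam i) * τ)
        = c n * Real.exp (-(lam n) * τ) := by
      rw [Finset.sum_range_succ]
      have hz : ∑ i ∈ Finset.range n, c i * Real.exp (-(lam i) * τ) = 0 :=
        Finset.sum_eq_zero fun i hi => by rw [ih i (Finset.mem_range.1 hi), zero_mul]
      rw [hz, zero_add]
    rw [hrange] at hsplit
    have htail_abs : Summable fun i => |c (i+(n+1))| * Real.exp (-(lam (i+(n+1))) * τ) :=
      (summable_nat_add_iff (f := fun l => |c l| * Real.exp (-(lam l) * τ)) (n+1)).mpr habs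
    have htail : Summable fun i => c (i+(n+1)) * Real.exp (-(lam (i+(n+1))) * τ) :=
      (summable_nat_add_iff (f := fun l => c l * Real.exp (-(lam l) * τ)) (n+1)).mpr hs
    -- step 1 : |c n| e^{-λ_n τ} ≤ tail of absolute values
    have h1 : |c n| * Real.exp (-(lam n) * τ)
        ≤ ∑' i, |c (i+(n+1))| * Real.exp (-(lam (i+(n+1))) * τ) := by
      have heq : c n * Real.exp (-(lam n) * τ)
          = -∑' i, c (i+(n+1)) * Real.exp (-(lam (i+(n+1))) * τ) := by linarith
      calc |c n| * Real.exp (-(lam n) * τ)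
          = |c n * Real.exp (-(lam n) * τ)| := by
            rw [abs_mul, abs_of_pos (Real.exp_pos _)]
        _ = |∑' i, c (i+(n+1)) * Real.exp (-(lam (i+(n+1))) * τ)| := by
            rw [heq, abs_neg]
        _ ≤ ∑' i, |c (i+(n+1))| * Real.exp (-(lam (i+(n+1))) * τ) := by
            have hn : Summable fun i => ‖c (i+(n+1)) * Real.exp (-(lam (i+(n+1))) * τ)‖ := by
              simpa [Real.norm_eq_abs, abs_mul, abs_of_pos (Real.exp_pos _)] using htail_abs
            simpa [Real.norm_eq_abs, abs_mul, abs_of_pos (Real.exp_pos _)] using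
              norm_tsum_le_tsum_norm hn
    -- step 2 : termwise bound on the tail
    have h2 : ∑' i, |c (i+(n+1))| * Real.exp (-(lam (i+(n+1))) * τ)
        ≤ (Real.exp (-δ * (τ-1)) * Real.exp (-(lam n) * (τ-1))) * T := by
      rw [hT, ← tsum_mul_left]
      refine Summable.tsum_le_tsum (fun i => ?_) htail_abs (habs1'.mul_left _)
      have hm : lam (n+1) ≤ lam (i+(n+1)) := hlam.monotone (Nat.le_add_left _ _)
      have hexp : Real.exp (-(lam (i+(n+1))) * τ)
          ≤ Real.exp (-δ * (τ-1)) * Real.exp (-(lam n) * (τ-1)) * Real.exp (-(lam (i+(n+1)))) := by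
        rw [← Real.exp_add, ← Real.exp_add]
        apply Real.exp_le_exp.mpr
        have h01 : 0 ≤ τ - 1 := by linarith
        nlinarith [mul_le_mul_of_nonneg_right hm h01]
      calc |c (i+(n+1))| * Real.exp (-(lam (i+(n+1))) * τ)
          ≤ |c (i+(n+1))| * (Real.exp (-δ * (τ-1)) * Real.exp (-(lam n) * (τ-1))
              * Real.exp (-(lam (i+(n+1))))) :=
            mul_le_mul_of_nonneg_left hexp (abs_nonneg _)
        _ = Real.exp (-δ * (τ-1)) * Real.exp (-(lam n) * (τ-1))
              * (|c (i+(n+1))| * Real.exp (-(lam (i+(n+1))))) := by ring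
    -- combine and divide by e^{-λ_n τ}
    have h3 : |c n| * Real.exp (-(lam n) * τ)
        ≤ (Real.exp (-δ * (τ-1)) * Real.exp (-(lam n) * (τ-1))) * T := le_trans h1 h2
    have hepos : (0:ℝ) < Real.exp (-(lam n) * τ) := Real.exp_pos _
    rw [← le_div_iff₀ hepos] at h3
    refine le_trans h3 (le_of_eq ?_)
    rw [hK, div_eq_iff hepos.ne']
    rw [show Real.exp (lam n) * T * Real.exp (-δ * (τ-1)) * Real.exp (-(lam n) * τ)
        = (Real.exp (lam n) * Real.exp (-δ * (τ-1)) * Real.exp (-(lam n) * τ)) * T by ring]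
    rw [show Real.exp (-δ * (τ-1)) * Real.exp (-(lam n) * (τ-1)) * T
        = (Real.exp (-δ * (τ-1)) * Real.exp (-(lam n) * (τ-1))) * T by ring]
    rw [← Real.exp_add, ← Real.exp_add, ← Real.exp_add]
    congr 2
    ring
  -- conclude by letting τ → ∞
  have hlim : Filter.Tendsto (fun τ : ℝ => K * Real.exp (-δ * (τ-1)))
      Filter.atTop (nhds 0) := by
    have h1 : Filter.Tendsto (fun τ : ℝ => -δ * (τ-1)) Filter.atTop Filter.atBot := by
      apply Filter.Tendsto.const_mul_atTop_of_neg (neg_neg_iff_pos.mpr hδ)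
      exact Filter.tendsto_atTop_add_const_right _ _ Filter.tendsto_id
    have := (Real.tendsto_exp_atBot.comp h1).const_mul K
    simpa using this
  have hle : |c n| ≤ 0 :=
    ge_of_tendsto hlim (Filter.eventually_atTop.2 ⟨1, key⟩)
  exact abs_nonpos_iff.mp hle
end

section
/- Let λ : ℕ → ℝ be strictly increasing and let c : ℕ → ℝ be such that for every τ > 0 the series ∑_l |c_l| e^{−λ_l τ} converges. Then the leading coefficient is recovered from the large-time asymptotics: lim_{τ → ∞} e^{λ_0 τ} · ∑_{l=0}^{∞} c_l e^{−λ_l τ} = c_0. -/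
open Filter

/-- For a generalized Dirichlet series with strictly increasing exponents,
absolutely convergent for every `τ > 0`, the leading coefficient is recovered
from the large-time asymptotics. -/
theorem dirichlet_series_leading_coeff (lam : ℕ → ℝ) (hlam : StrictMono lam)
    (c : ℕ → ℝ)
    (hc : ∀ τ : ℝ, 0 < τ → Summable fun l => |c l| * Real.exp (-(lam l) * τ)) :
    Tendsto (fun τ : ℝ =>
        Real.exp (lam 0 * τ) * ∑' l, c l * Real.exp (-(lam l) * τ))
      atTop (nhds (c 0)) := by
  have hδ : 0 < lam 1 - lam 0 := sub_pos.2 (hlam Nat.zero_lt_one)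
  -- absolute summability of the shifted series
  have habs : ∀ τ : ℝ, 0 < τ →
      Summable fun l => |c (l + 1)| * Real.exp (-(lam (l + 1) - lam 0) * τ) := by
    intro τ hτ
    have h1 : Summable fun l => |c (l + 1)| * Real.exp (-(lam (l + 1)) * τ) :=
      (summable_nat_add_iff 1).2 (hc τ hτ)
    refine (h1.mul_left (Real.exp (lam 0 * τ))).congr fun l => ?_
    rw [← mul_assoc, mul_comm (Real.exp _) (|c (l + 1)|), mul_assoc, ← Real.exp_add]
    ring_nf
  set R : ℝ → ℝ := fun τ => ∑' l, c (l + 1) * Real.exp (-(lam (l + 1) - lam 0) * τ) with hRdef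
  have heq : ∀ τ : ℝ, 0 < τ →
      Real.exp (lam 0 * τ) * ∑' l, c l * Real.exp (-(lam l) * τ) = c 0 + R τ := by
    intro τ hτ
    have hs : Summable fun l => c l * Real.exp (-(lam l) * τ) := by
      apply Summable.of_abs
      refine (hc τ hτ).congr fun l => ?_
      rw [abs_mul, abs_of_pos (Real.exp_pos _)]
    have h2 : ∀ l, Real.exp (lam 0 * τ) * (c l * Real.exp (-(lam l) * τ))
        = c l * Real.exp (-(lam l - lam 0) * τ) := by
      intro l
      rw [mul_comm (Real.exp _) _, mul_assoc, ← Real.exp_add]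
      ring_nf
    have hs2 : Summable fun l => c l * Real.exp (-(lam l - lam 0) * τ) :=
      (hs.mul_left (Real.exp (lam 0 * τ))).congr fun l => h2 l
    rw [← tsum_mul_left]
    calc (∑' l, Real.exp (lam 0 * τ) * (c l * Real.exp (-(lam l) * τ)))
        = ∑' l, c l * Real.exp (-(lam l - lam 0) * τ) := by
          exact tsum_congr fun l => h2 l
      _ = c 0 * Real.exp (-(lam 0 - lam 0) * τ)
          + ∑' l, c (l + 1) * Real.exp (-(lam (l + 1) - lam 0) * τ) :=
          Summable.tsum_eq_zero_add hs2
      _ = c 0 + R τ := by simp [hRdef]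
  -- the tail tends to 0
  have hRtendsto : Tendsto R atTop (nhds 0) := by
    set C := ∑' l, |c (l + 1)| * Real.exp (-(lam (l + 1) - lam 0)) with hC
    have hbound : ∀ τ : ℝ, 1 ≤ τ →
        ‖R τ‖ ≤ C * Real.exp (-(lam 1 - lam 0) * (τ - 1)) := by
      intro τ hτ
      have hτ0 : 0 < τ := lt_of_lt_of_le one_pos hτ
      have habsτ : Summable fun l => |c (l + 1)| * Real.exp (-(lam (l + 1) - lam 0) * τ) :=
        habs τ hτ0
      have habs1 : Summable fun l => |c (l + 1)| * Real.exp (-(lam (l + 1) - lam 0)) := by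
        have := habs 1 one_pos
        simpa using this
      have hnorm : Summable fun l => ‖c (l + 1) * Real.exp (-(lam (l + 1) - lam 0) * τ)‖ := by
        refine habsτ.congr fun l => ?_
        rw [Real.norm_eq_abs, abs_mul, abs_of_pos (Real.exp_pos _)]
      have h1 : ‖R τ‖ ≤ ∑' l, ‖c (l + 1) * Real.exp (-(lam (l + 1) - lam 0) * τ)‖ :=
        norm_tsum_le_tsum_norm hnorm
      have hterm : ∀ l, ‖c (l + 1) * Real.exp (-(lam (l + 1) - lam 0) * τ)‖
          ≤ (|c (l + 1)| * Real.exp (-(lam (l + 1) - lam 0)))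
            * Real.exp (-(lam 1 - lam 0) * (τ - 1)) := by
        intro l
        rw [Real.norm_eq_abs, abs_mul, abs_of_pos (Real.exp_pos _), mul_assoc,
          ← Real.exp_add]
        refine mul_le_mul_of_nonneg_left ?_ (abs_nonneg _)
        apply Real.exp_le_exp.2
        have h1l : lam 1 ≤ lam (l + 1) := hlam.monotone (Nat.one_le_iff_ne_zero.2 (Nat.succ_ne_zero l))
        nlinarith [sub_nonneg.2 hτ]
      have h2 : (∑' l, ‖c (l + 1) * Real.exp (-(lam (l + 1) - lam 0) * τ)‖)
          ≤ ∑' l, (|c (l + 1)| * Real.exp (-(lam (l + 1) - lam 0)))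
              * Real.exp (-(lam 1 - lam 0) * (τ - 1)) :=
        Summable.tsum_le_tsum hterm hnorm (habs1.mul_right _)
      calc ‖R τ‖ ≤ _ := h1
        _ ≤ _ := h2
        _ = C * Real.exp (-(lam 1 - lam 0) * (τ - 1)) := tsum_mul_right
    have hup : Tendsto (fun τ : ℝ => C * Real.exp (-(lam 1 - lam 0) * (τ - 1)))
        atTop (nhds (C * 0)) := by
      apply Tendsto.const_mul
      apply Real.tendsto_exp_atBot.comp
      have h1 : Tendsto (fun τ : ℝ => τ - 1) atTop atTop :=
        tendsto_atTop_add_const_right atTop (-1) tendsto_id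
      exact h1.const_mul_atTop_of_neg (neg_lt_zero.2 hδ)
    rw [mul_zero] at hup
    exact squeeze_zero_norm' (eventually_atTop.2 ⟨1, hbound⟩) hup
  have h : Tendsto (fun τ => c 0 + R τ) atTop (nhds (c 0 + 0)) :=
    Tendsto.add tendsto_const_nhds hRtendsto
  rw [add_zero] at h
  refine h.congr' ?_
  filter_upwards [eventually_gt_atTop (0 : ℝ)] with τ hτ
  exact (heq τ hτ).symm
end

section
/- Let λ : ℕ → ℝ and let c : ℕ → ℂ be such that for every ε > 0 the series ∑_l |c_l| e^{−λ_l ε} converges, and set F(z) = ∑_{l=0}^{∞} c_l e^{−λ_l z} on the half-plane {Re z > 0}. If there exist real numbers 0 < a < b such that F(t) = 0 for all real t ∈ (a, b), then F(z) = 0 for all z ∈ ℂ with Re z > 0. Consequently, knowledge of such a generalized Dirichlet series on a finite time interval determines it on all of (0, ∞). -/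
noncomputable def Gser (lam : ℕ → ℝ) (c : ℕ → ℂ) : ℂ → ℂ :=
  fun z => ∑' l, c l * Complex.exp (-(lam l : ℂ) * z)

lemma Gser_norm_term (lam : ℕ → ℝ) (c : ℕ → ℂ) (l : ℕ) (w : ℂ) :
    ‖c l * Complex.exp (-(lam l : ℂ) * w)‖ = ‖c l‖ * Real.exp (-(lam l) * w.re) := by
  rw [norm_mul, Complex.norm_exp]
  congr 2
  simp [Complex.mul_re]

lemma Gser_diffAt (lam : ℕ → ℝ) (c : ℕ → ℂ)
    (hc : ∀ ε : ℝ, 0 < ε → Summable fun l => ‖c l‖ * Real.exp (-(lam l) * ε))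
    {z : ℂ} (hz : 0 < z.re) : DifferentiableAt ℂ (Gser lam c) z := by
  set ε := z.re / 2 with hε
  set R := z.re + 1 with hR
  have hε0 : 0 < ε := by positivity
  have hR0 : 0 < R := by positivity
  set S : Set ℂ := Complex.re ⁻¹' Set.Ioo ε R with hS
  have hSopen : IsOpen S := isOpen_Ioo.preimage Complex.continuous_re
  have hzS : z ∈ S := ⟨by linarith, by linarith⟩
  have hdiff : DifferentiableOn ℂ (Gser lam c) S := by
    apply Complex.differentiableOn_tsum_of_summable_norm ((hc ε hε0).add (hc R hR0))
      (fun i => Differentiable.differentiableOn (by fun_prop)) hSopen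
    intro i w hw
    rw [Gser_norm_term]
    rcases le_total 0 (lam i) with h | h
    · have : Real.exp (-(lam i) * w.re) ≤ Real.exp (-(lam i) * ε) := by
        apply Real.exp_le_exp.mpr
        nlinarith [hw.1.le]
      nlinarith [norm_nonneg (c i), Real.exp_pos (-(lam i) * R), Real.exp_pos (-(lam i) * ε)]
    · have : Real.exp (-(lam i) * w.re) ≤ Real.exp (-(lam i) * R) := by
        apply Real.exp_le_exp.mpr
        nlinarith [hw.2.le]
      nlinarith [norm_nonneg (c i), Real.exp_pos (-(lam i) * R), Real.exp_pos (-(lam i) * ε)]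
  exact (hdiff.differentiableAt (hSopen.mem_nhds hzS))

/-- A generalized Dirichlet series which converges absolutely on every vertical
line `Re z = ε > 0` and vanishes on a real interval `(a, b) ⊆ (0, ∞)` vanishes
on the whole open right half-plane. -/
theorem dirichlet_series_unique_continuation (lam : ℕ → ℝ) (c : ℕ → ℂ)
    (hc : ∀ ε : ℝ, 0 < ε → Summable fun l => ‖c l‖ * Real.exp (-(lam l) * ε))
    (F : ℂ → ℂ) (hF : ∀ z : ℂ, 0 < z.re →
      F z = ∑' l, c l * Complex.exp (-(lam l : ℂ) * z))
    (a b : ℝ) (ha : 0 < a) (hab : a < b)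
    (hzero : ∀ t : ℝ, t ∈ Set.Ioo a b → F (t : ℂ) = 0) :
    ∀ z : ℂ, 0 < z.re → F z = 0 := by
  set U : Set ℂ := Complex.re ⁻¹' Set.Ioi 0 with hU
  have hUopen : IsOpen U := isOpen_Ioi.preimage Complex.continuous_re
  have hGdiff : DifferentiableOn ℂ (Gser lam c) U :=
    fun z hz => (Gser_diffAt lam c hc hz).differentiableWithinAt
  have hGan : AnalyticOnNhd ℂ (Gser lam c) U := hGdiff.analyticOnNhd hUopen
  have hUpre : IsPreconnected U := (convex_halfSpace_re_gt 0).isPreconnected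
  -- z₀ and the sequence
  set z₀ : ℂ := (((a + b) / 2 : ℝ) : ℂ) with hz₀
  have hz₀U : z₀ ∈ U := by
    simp only [hU, Set.mem_preimage, Set.mem_Ioi, hz₀, Complex.ofReal_re]
    linarith
  -- sequence of real points in (a,b) tending to z₀
  set r : ℕ → ℝ := fun n => (a + b) / 2 + (b - a) / (2 * (n + 2)) with hr
  have hrmem : ∀ n, r n ∈ Set.Ioo a b := by
    intro n
    have h2 : (0:ℝ) < 2 * ((n:ℝ) + 2) := by positivity
    have h1 : (0:ℝ) < (b - a) / (2 * (n + 2)) := div_pos (by linarith) (by positivity)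
    constructor
    · simp only [hr]; nlinarith
    · simp only [hr]
      have : (b - a) / (2 * (n + 2)) ≤ (b - a) / 4 := by
        apply div_le_div_of_nonneg_left (by linarith) (by norm_num) (by nlinarith)
      nlinarith
  have hrne : ∀ n, ((r n : ℝ) : ℂ) ≠ z₀ := by
    intro n
    simp only [hz₀, ne_eq, Complex.ofReal_inj]
    have h1 : (0:ℝ) < (b - a) / (2 * (n + 2)) := div_pos (by linarith) (by positivity)
    simp only [hr]; intro h; linarith [h]
  have hrtend : Filter.Tendsto (fun n => ((r n : ℝ) : ℂ)) Filter.atTop (nhdsWithin z₀ {z₀}ᶜ) := by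
    apply tendsto_nhdsWithin_of_tendsto_nhds_of_eventually_within
    · apply Filter.Tendsto.comp (Complex.continuous_ofReal.tendsto _)
      have : Filter.Tendsto (fun n : ℕ => (b - a) / (2 * (n + 2))) Filter.atTop (nhds 0) := by
        apply Filter.Tendsto.div_atTop tendsto_const_nhds
        apply Filter.Tendsto.const_mul_atTop (by norm_num : (0:ℝ) < 2)
        exact Filter.tendsto_atTop_add_const_right _ 2 tendsto_natCast_atTop_atTop
      have := this.const_add ((a + b) / 2)
      simpa [hr] using this
    · exact Filter.Eventually.of_forall fun n => hrne n
  have hfreq : ∃ᶠ z in nhdsWithin z₀ {z₀}ᶜ, Gser lam c z = 0 := by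
    apply hrtend.frequently
    apply Filter.Frequently.of_forall
    intro n
    have hmem := hrmem n
    have hre : (0:ℝ) < ((r n : ℝ) : ℂ).re := by
      simp only [Complex.ofReal_re]; linarith [hmem.1]
    have := hzero (r n) hmem
    rw [hF _ hre] at this
    exact this
  have hEq : Set.EqOn (Gser lam c) 0 U :=
    hGan.eqOn_zero_of_preconnected_of_frequently_eq_zero hUpre hz₀U hfreq
  intro z hz
  rw [hF z hz]
  exact hEq hz
end
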